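/- Let γ ∈ (0,1], σ > 0, α ∈ [0,1/2) and λ₁ > 0. There exists a constant C > 0, depending only on γ, σ and λ₁, with the following property. Let z ∈ [0, λ₁] and let w : ℤ³ → (ℝ³ → ℂ) be a family of three-times continuously differentiable functions such that G := ∑_{j=0}^{3} ∑_{k ∈ ℤ³} ∫_{ℝ³} exp(2z⟨k,η⟩^γ)·‖D^j w_k(η)‖²·⟨k,η⟩^{2σ} dη < ∞, where D^j w_k(η) denotes the j-th iterated Fréchet derivative of w_k at η (with its operator norm). Then sup_{k ∈ ℤ³} sup_{η ∈ ℝ³} exp(z⟨k,η⟩^γ)·⟨k,η⟩^σ·|w_k(η)| ≤ C·G^{1/2}; in particular, for every t ≥ 0, sup_{k ∈ ℤ³, k ≠ 0} exp(z⟨k,kt⟩^γ)·⟨k,kt⟩^σ·|k|^{−α}·|w_k(kt)| ≤ C·G^{1/2}. -/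

import Mathlib

/-- Euclidean norm of a lattice point `k ∈ ℤ³`, viewed as a vector of `ℝ³`. -/
noncomputable def knorm (k : Fin 3 → ℤ) : ℝ := Real.sqrt (∑ i, ((k i : ℝ)) ^ 2)

/-- Japanese bracket `⟨k, η⟩ = √(1 + |k|² + |η|²)` for `k ∈ ℤ³`, `η ∈ ℝ³`. -/
noncomputable def jbe (k : Fin 3 → ℤ) (η : EuclideanSpace ℝ (Fin 3)) : ℝ :=
  Real.sqrt (1 + (∑ i, ((k i : ℝ)) ^ 2) + ‖η‖ ^ 2)

/-- The vector `kt = t·k ∈ ℝ³`. -/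
noncomputable def ktv (k : Fin 3 → ℤ) (t : ℝ) : EuclideanSpace ℝ (Fin 3) :=
  (WithLp.equiv 2 (Fin 3 → ℝ)).symm (fun i => t * (k i : ℝ))

open MeasureTheory Set

lemma normsq_complex (z : ℂ) : ‖z‖^2 = z.re^2 + z.im^2 := by
  rw [Complex.sq_norm, Complex.normSq_apply]; ring

lemma oneD (v : ℝ → ℂ) (hv : ContDiff ℝ 1 v) :
    ENNReal.ofReal (‖v 0‖ ^ 2) ≤
      2 * ∫⁻ t in Icc (0:ℝ) 1,
        (ENNReal.ofReal (‖v t‖^2) + ENNReal.ofReal (‖deriv v t‖^2)) := by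
  set φ : ℝ → ℝ := fun t => ‖v t‖^2 with hφdef
  have hvc : Continuous v := hv.continuous
  have hdc : Continuous (deriv v) := hv.continuous_deriv le_rfl
  have hd : ∀ t, HasDerivAt v (deriv v t) t := fun t =>
    ((hv.differentiable one_ne_zero) t).hasDerivAt
  set φ' : ℝ → ℝ := fun t =>
    2 * (v t).re * (deriv v t).re + 2 * (v t).im * (deriv v t).im with hφ'def
  have hφ'c : Continuous φ' := by fun_prop
  have hφc : Continuous φ := by fun_prop
  have hder : ∀ t, HasDerivAt φ (φ' t) t := by
    intro t
    have hre : HasDerivAt (fun t => (v t).re) ((deriv v t).re) t :=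
      (Complex.reCLM.hasFDerivAt.comp_hasDerivAt t (hd t))
    have him : HasDerivAt (fun t => (v t).im) ((deriv v t).im) t :=
      (Complex.imCLM.hasFDerivAt.comp_hasDerivAt t (hd t))
    have h : HasDerivAt (fun t => (v t).re * (v t).re + (v t).im * (v t).im) _ t :=
      ((hre.mul hre).add (him.mul him))
    have : φ = fun t => (v t).re * (v t).re + (v t).im * (v t).im := by
      funext s; rw [hφdef]; simp only [normsq_complex]; ring
    rw [this]
    convert h using 1
    simp only [hφ'def]; ring
  have hbound : ∀ t, |φ' t| ≤ φ t + ‖deriv v t‖^2 := by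
    intro t
    have h1 : φ t = (v t).re^2 + (v t).im^2 := normsq_complex _
    have h2 : ‖deriv v t‖^2 = (deriv v t).re^2 + (deriv v t).im^2 := normsq_complex _
    rw [h1, h2, abs_le]
    constructor <;> simp only [hφ'def] <;> nlinarith [sq_nonneg ((v t).re - (deriv v t).re), sq_nonneg ((v t).im - (deriv v t).im), sq_nonneg ((v t).re + (deriv v t).re), sq_nonneg ((v t).im + (deriv v t).im)]
  obtain ⟨a, ha, hmin⟩ := (isCompact_Icc (a := (0:ℝ)) (b := 1)).exists_isMinOn
    ⟨0, by norm_num⟩ hφc.continuousOn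
  -- FTC bound
  have hftc : ∫ s in (0:ℝ)..a, φ' s = φ a - φ 0 :=
    intervalIntegral.integral_eq_sub_of_hasDerivAt (fun s _ => hder s)
      (hφ'c.intervalIntegrable _ _)
  have hstep1 : φ 0 ≤ φ a + ∫ t in Icc (0:ℝ) 1, |φ' t| := by
    have habs : |∫ s in (0:ℝ)..a, φ' s| ≤ ∫ s in (0:ℝ)..a, |φ' s| :=
      intervalIntegral.abs_integral_le_integral_abs ha.1
    have h2 : ∫ s in (0:ℝ)..a, |φ' s| ≤ ∫ t in Icc (0:ℝ) 1, |φ' t| := by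
      rw [intervalIntegral.integral_of_le ha.1]
      apply setIntegral_mono_set (hφ'c.abs.integrableOn_Icc)
        (Filter.Eventually.of_forall fun t => abs_nonneg _)
      exact HasSubset.Subset.eventuallyLE (fun t ht => ⟨le_of_lt ht.1, le_trans ht.2 ha.2⟩)
    have : φ 0 - φ a ≤ |∫ s in (0:ℝ)..a, φ' s| := by
      rw [hftc]; rw [abs_sub_comm]; exact le_abs_self _
    linarith
  have hmean : φ a ≤ ∫ t in Icc (0:ℝ) 1, φ t := by
    have : ∫ t in Icc (0:ℝ) 1, φ a ≤ ∫ t in Icc (0:ℝ) 1, φ t := by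
      apply setIntegral_mono_on (integrableOn_const (by simp))
        (hφc.integrableOn_Icc) measurableSet_Icc
      intro t ht; exact hmin ht
    simpa [Real.volume_Icc] using this
  have hstep2 : ∫ t in Icc (0:ℝ) 1, |φ' t| ≤ ∫ t in Icc (0:ℝ) 1, (φ t + ‖deriv v t‖^2) := by
    apply setIntegral_mono (hφ'c.abs.integrableOn_Icc)
      ((hφc.add (hdc.norm.pow 2)).integrableOn_Icc)
    intro t; exact hbound t
  have key : φ 0 ≤ ∫ t in Icc (0:ℝ) 1, (2 * φ t + ‖deriv v t‖^2) := by
    have : ∫ t in Icc (0:ℝ) 1, (2 * φ t + ‖deriv v t‖^2)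
        = (∫ t in Icc (0:ℝ) 1, φ t) + ∫ t in Icc (0:ℝ) 1, (φ t + ‖deriv v t‖^2) := by
      rw [← integral_add hφc.integrableOn_Icc ((show Continuous fun t => φ t + ‖deriv v t‖^2 from hφc.add (hdc.norm.pow 2)).integrableOn_Icc)]
      congr 1; funext t; ring
    rw [this]; linarith
  -- convert to lintegral
  calc ENNReal.ofReal (‖v 0‖^2) ≤ ENNReal.ofReal (∫ t in Icc (0:ℝ) 1, (2 * φ t + ‖deriv v t‖^2)) :=
        ENNReal.ofReal_le_ofReal key
    _ = ∫⁻ t in Icc (0:ℝ) 1, ENNReal.ofReal (2 * φ t + ‖deriv v t‖^2) := by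
        rw [MeasureTheory.ofReal_integral_eq_lintegral_ofReal
          ((by fun_prop : Continuous fun t => 2 * φ t + ‖deriv v t‖^2).integrableOn_Icc)]
        exact Filter.Eventually.of_forall fun t => by positivity
    _ ≤ ∫⁻ t in Icc (0:ℝ) 1, 2 * (ENNReal.ofReal (φ t) + ENNReal.ofReal (‖deriv v t‖^2)) := by
        apply lintegral_mono; intro t
        dsimp only
        have h2e : (2:ENNReal) = ENNReal.ofReal 2 := by norm_num
        rw [h2e, ← ENNReal.ofReal_add (by positivity) (by positivity),
          ← ENNReal.ofReal_mul (by norm_num)]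
        apply ENNReal.ofReal_le_ofReal; nlinarith [sq_nonneg ‖deriv v t‖]
    _ = 2 * ∫⁻ t in Icc (0:ℝ) 1, (ENNReal.ofReal (φ t) + ENNReal.ofReal (‖deriv v t‖^2)) :=
        lintegral_const_mul' 2 _ (by norm_num)

noncomputable abbrev Esp := EuclideanSpace ℝ (Fin 3)

noncomputable def eE (i : Fin 3) : Esp := EuclideanSpace.single i 1

lemma norm_eE (i : Fin 3) : ‖eE i‖ = 1 := by
  simp [eE, EuclideanSpace.norm_single]

noncomputable def Pd (i : Fin 3) (v : Esp → ℂ) : Esp → ℂ := fun x => fderiv ℝ v x (eE i)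

lemma Pd_eq_comp (i : Fin 3) (v : Esp → ℂ) :
    Pd i v = (ContinuousLinearMap.apply ℝ ℂ (eE i)) ∘ (fderiv ℝ v) := rfl

lemma contDiff_Pd {n : ℕ} {v : Esp → ℂ} (hv : ContDiff ℝ (n + 1 : ℕ) v) (i : Fin 3) :
    ContDiff ℝ (n : ℕ) (Pd i v) := by
  rw [Pd_eq_comp]
  exact (ContinuousLinearMap.apply ℝ ℂ (eE i)).contDiff.comp
    (hv.fderiv_right (by exact_mod_cast le_rfl))

lemma norm_apply_clm_le (i : Fin 3) : ‖ContinuousLinearMap.apply ℝ ℂ (eE i)‖ ≤ 1 := by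
  apply ContinuousLinearMap.opNorm_le_bound _ zero_le_one
  intro L
  rw [one_mul, ContinuousLinearMap.apply_apply]
  calc ‖L (eE i)‖ ≤ ‖L‖ * ‖eE i‖ := L.le_opNorm _
    _ = ‖L‖ := by rw [norm_eE, mul_one]

lemma norm_Pd_le {n : ℕ} {v : Esp → ℂ} (hv : ContDiff ℝ (n + 1 : ℕ) v) (i : Fin 3) (x : Esp) :
    ‖iteratedFDeriv ℝ n (Pd i v) x‖ ≤ ‖iteratedFDeriv ℝ (n + 1) v x‖ := by
  rw [Pd_eq_comp]
  rw [ContinuousLinearMap.iteratedFDeriv_comp_left _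
    (hv.fderiv_right (m := (n : ℕ∞)) (by exact_mod_cast le_rfl)).contDiffAt (x := x) (le_rfl)]
  calc ‖(ContinuousLinearMap.apply ℝ ℂ (eE i)).compContinuousMultilinearMap
        (iteratedFDeriv ℝ n (fderiv ℝ v) x)‖
      ≤ ‖ContinuousLinearMap.apply ℝ ℂ (eE i)‖ * ‖iteratedFDeriv ℝ n (fderiv ℝ v) x‖ :=
        ContinuousLinearMap.norm_compContinuousMultilinearMap_le _ _
    _ ≤ 1 * ‖iteratedFDeriv ℝ n (fderiv ℝ v) x‖ := by
        gcongr; exact norm_apply_clm_le i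
    _ = ‖iteratedFDeriv ℝ (n + 1) v x‖ := by rw [one_mul, norm_iteratedFDeriv_fderiv]

lemma sliceE {v : Esp → ℂ} (hv : ContDiff ℝ 1 v) (y : Esp) (i : Fin 3) :
    ENNReal.ofReal (‖v y‖^2) ≤ 2 * ∫⁻ t in Icc (0:ℝ) 1,
      (ENNReal.ofReal (‖v (y + t • eE i)‖^2) + ENNReal.ofReal (‖Pd i v (y + t • eE i)‖^2)) := by
  set c : ℝ → Esp := fun t => y + t • eE i with hc
  have hcc : ContDiff ℝ 1 c := contDiff_const.add (contDiff_id.smul contDiff_const)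
  have hw : ContDiff ℝ 1 (v ∘ c) := hv.comp hcc
  have h0 : (v ∘ c) 0 = v y := by simp [hc, Function.comp]
  have hder : ∀ t, deriv (v ∘ c) t = Pd i v (c t) := by
    intro t
    have hct : HasDerivAt c (eE i) t := by
      have h1 : HasDerivAt (fun s : ℝ => s • eE i) ((1:ℝ) • eE i) t :=
        (hasDerivAt_id t).smul_const (eE i)
      rw [one_smul] at h1
      exact h1.const_add y
    have : HasDerivAt (v ∘ c) (fderiv ℝ v (c t) (eE i)) t :=
      ((hv.differentiable one_ne_zero) (c t)).hasFDerivAt.comp_hasDerivAt t hct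
    exact this.deriv
  have h := oneD (v ∘ c) hw
  rw [h0] at h
  refine h.trans_eq ?_
  congr 1
  apply lintegral_congr
  intro t
  rw [hder t]
  rfl

lemma iterated_le_lintegral (h : Esp → ENNReal) (hm : Measurable h) (x : Esp) :
    (∫⁻ t₀ in Icc (0:ℝ) 1, ∫⁻ t₁ in Icc (0:ℝ) 1, ∫⁻ t₂ in Icc (0:ℝ) 1,
        h (x + t₀ • eE 0 + t₁ • eE 1 + t₂ • eE 2)) ≤ ∫⁻ y, h y := by
  set ψ := (MeasurableEquiv.toLp 2 (Fin 3 → ℝ)).symm with hψ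
  set g : (Fin 3 → ℝ) → ENNReal := fun p => h (ψ.symm p) with hg
  have hgm : Measurable g := hm.comp ψ.symm.measurable
  set x₀ : Fin 3 → ℝ := fun i => x i with hx₀
  have hpt : ∀ t₀ t₁ t₂ : ℝ, h (x + t₀ • eE 0 + t₁ • eE 1 + t₂ • eE 2) =
      g (Function.update (Function.update (Function.update x₀ 0 (x₀ 0 + t₀))
          1 (x₀ 1 + t₁)) 2 (x₀ 2 + t₂)) := by
    intro t₀ t₁ t₂
    rw [hg]
    congr 1
    apply (MeasurableEquiv.toLp 2 (Fin 3 → ℝ)).symm.injective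
    rw [MeasurableEquiv.apply_symm_apply]
    funext i
    fin_cases i <;>
      simp [eE, MeasurableEquiv.coe_toLp, Function.update,
        PiLp.add_apply, PiLp.smul_apply, EuclideanSpace.single_apply] <;> ring
  calc (∫⁻ t₀ in Icc (0:ℝ) 1, ∫⁻ t₁ in Icc (0:ℝ) 1, ∫⁻ t₂ in Icc (0:ℝ) 1,
        h (x + t₀ • eE 0 + t₁ • eE 1 + t₂ • eE 2))
      ≤ ∫⁻ t₀, ∫⁻ t₁, ∫⁻ t₂, h (x + t₀ • eE 0 + t₁ • eE 1 + t₂ • eE 2) := by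
        refine le_trans (setLIntegral_le_lintegral _ _) (lintegral_mono fun t₀ => ?_)
        refine le_trans (setLIntegral_le_lintegral _ _) (lintegral_mono fun t₁ => ?_)
        exact setLIntegral_le_lintegral _ _
    _ = ∫⁻ s₀, ∫⁻ s₁, ∫⁻ s₂, g (Function.update (Function.update (Function.update x₀ 0 s₀)
          1 s₁) 2 s₂) := by
        rw [← lintegral_add_left_eq_self (fun s₀ => ∫⁻ s₁, ∫⁻ s₂, g
          (Function.update (Function.update (Function.update x₀ 0 s₀) 1 s₁) 2 s₂)) (x₀ 0)]
        apply lintegral_congr; intro t₀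
        rw [← lintegral_add_left_eq_self (fun s₁ => ∫⁻ s₂, g
          (Function.update (Function.update (Function.update x₀ 0 (x₀ 0 + t₀)) 1 s₁) 2 s₂)) (x₀ 1)]
        apply lintegral_congr; intro t₁
        rw [← lintegral_add_left_eq_self (fun s₂ => g
          (Function.update (Function.update (Function.update x₀ 0 (x₀ 0 + t₀))
            1 (x₀ 1 + t₁)) 2 s₂)) (x₀ 2)]
        apply lintegral_congr; intro t₂
        exact hpt t₀ t₁ t₂
    _ = ∫⁻ p : Fin 3 → ℝ, g p := by
        have huniv : (Finset.univ : Finset (Fin 3)) = insert 0 (insert 1 (insert 2 ∅)) := by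
          decide
        have hvp : ∫⁻ p : Fin 3 → ℝ, g p = ∫⁻ p : Fin 3 → ℝ, g p ∂(Measure.pi fun _ => volume) := by
          rw [← MeasureTheory.volume_pi]
        have hlm := congrFun (MeasureTheory.lmarginal_univ
          (μ := fun _ : Fin 3 => (volume : Measure ℝ)) (f := g)) x₀
        rw [hvp, ← hlm, huniv]
        rw [MeasureTheory.lmarginal_insert _ hgm (by decide)]
        apply lintegral_congr; intro s₀
        rw [MeasureTheory.lmarginal_insert _ hgm (by decide)]
        apply lintegral_congr; intro s₁
        rw [MeasureTheory.lmarginal_insert _ hgm (by decide)]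
        apply lintegral_congr; intro s₂
        rw [MeasureTheory.lmarginal_empty]
    _ = ∫⁻ y, h y := by
        have hmp := (EuclideanSpace.volume_preserving_symm_measurableEquiv_toLp (Fin 3)).symm
        calc ∫⁻ p : Fin 3 → ℝ, g p = ∫⁻ p : Fin 3 → ℝ, h (ψ.symm p) := rfl
          _ = ∫⁻ y, h y := hmp.lintegral_comp hm

def Qx (x : Esp) : Set Esp := {y : Esp | ∀ i, y i ∈ Icc (x i) (x i + 1)}

lemma measurableSet_Qx (x : Esp) : MeasurableSet (Qx x) := by
  have h : Qx x = ⋂ i, (fun y : Esp => y i) ⁻¹' Icc (x i) (x i + 1) := by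
    ext y; simp [Qx]
  rw [h]
  refine MeasurableSet.iInter fun i => ?_
  have hc : Continuous (fun y : Esp => y i) := by
    exact (EuclideanSpace.proj (𝕜 := ℝ) i).continuous
  exact hc.measurable measurableSet_Icc

lemma mem_Qx {x : Esp} {t₀ t₁ t₂ : ℝ} (h₀ : t₀ ∈ Icc (0:ℝ) 1) (h₁ : t₁ ∈ Icc (0:ℝ) 1)
    (h₂ : t₂ ∈ Icc (0:ℝ) 1) : x + t₀ • eE 0 + t₁ • eE 1 + t₂ • eE 2 ∈ Qx x := by
  intro i
  fin_cases i <;>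
    · simp only [eE, PiLp.add_apply, PiLp.smul_apply, EuclideanSpace.single_apply,
        smul_eq_mul, Fin.isValue]
      norm_num [Fin.ext_iff]
      constructor <;> [linarith [h₀.1, h₁.1, h₂.1]; linarith [h₀.2, h₁.2, h₂.2]]

lemma cube_sobolev {u : Esp → ℂ} (hu : ContDiff ℝ 3 u) (x : Esp) :
    ENNReal.ofReal (‖u x‖^2) ≤ 24 * ∑ j ∈ Finset.range 4,
      ∫⁻ y in Qx x, ENNReal.ofReal (‖iteratedFDeriv ℝ j u y‖^2) := by
  have hu3 : ContDiff ℝ ((2:ℕ) + 1 : ℕ) u := by exact_mod_cast hu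
  have hu2 : ContDiff ℝ ((1:ℕ) + 1 : ℕ) u := hu3.of_le (by exact_mod_cast (by norm_num : (2:ℕ∞) ≤ 3))
  have hu1 : ContDiff ℝ ((0:ℕ) + 1 : ℕ) u := hu3.of_le (by exact_mod_cast (by norm_num : (1:ℕ∞) ≤ 3))
  have hu1' : ContDiff ℝ 1 u := by exact_mod_cast hu1
  -- chains
  have hP2 : ∀ i, ContDiff ℝ ((1:ℕ) + 1 : ℕ) (Pd i u) := fun i => contDiff_Pd hu3 i
  have hP1 : ∀ i, ContDiff ℝ ((0:ℕ) + 1 : ℕ) (Pd i u) := fun i =>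
    (hP2 i).of_le (by exact_mod_cast (by norm_num : (1:ℕ∞) ≤ 2))
  have hP1' : ∀ i, ContDiff ℝ 1 (Pd i u) := fun i => by exact_mod_cast hP1 i
  have hPP1 : ∀ i j, ContDiff ℝ ((0:ℕ) + 1 : ℕ) (Pd j (Pd i u)) := fun i j =>
    contDiff_Pd (hP2 i) j
  have hPP1' : ∀ i j, ContDiff ℝ 1 (Pd j (Pd i u)) := fun i j => by exact_mod_cast hPP1 i j
  have hPPPc : ∀ i j l, Continuous (Pd l (Pd j (Pd i u))) := fun i j l =>
    (contDiff_Pd (hPP1 i j) l).continuous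
  have hPPc : ∀ i j, Continuous (Pd j (Pd i u)) := fun i j => (hPP1' i j).continuous
  have hPc : ∀ i, Continuous (Pd i u) := fun i => (hP1' i).continuous
  have huc : Continuous u := hu.continuous
  -- norm bounds
  have hb1 : ∀ (i : Fin 3) (y : Esp), ‖Pd i u y‖ ≤ ‖iteratedFDeriv ℝ 1 u y‖ := by
    intro i y
    have := norm_Pd_le (n := 0) hu1 i y
    rwa [norm_iteratedFDeriv_zero] at this
  have hb2 : ∀ (i j : Fin 3) (y : Esp), ‖Pd j (Pd i u) y‖ ≤ ‖iteratedFDeriv ℝ 2 u y‖ := by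
    intro i j y
    have h1 := norm_Pd_le (n := 0) (hP1 i) j y
    rw [norm_iteratedFDeriv_zero] at h1
    have h2 := norm_Pd_le (n := 1) hu2 i y
    exact h1.trans h2
  have hb3 : ∀ (i j l : Fin 3) (y : Esp),
      ‖Pd l (Pd j (Pd i u)) y‖ ≤ ‖iteratedFDeriv ℝ 3 u y‖ := by
    intro i j l y
    have h1 := norm_Pd_le (n := 0) (hPP1 i j) l y
    rw [norm_iteratedFDeriv_zero] at h1
    have h2 := norm_Pd_le (n := 1) (hP2 i) j y
    have h3 := norm_Pd_le (n := 2) hu3 i y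
    exact h1.trans (h2.trans h3)
  -- level functions
  set F0 : Esp → ENNReal := fun y => ENNReal.ofReal (‖u y‖^2) + ENNReal.ofReal (‖Pd 0 u y‖^2)
    with hF0
  set F1 : Esp → ENNReal := fun y =>
    (ENNReal.ofReal (‖u y‖^2) + ENNReal.ofReal (‖Pd 1 u y‖^2)) +
    (ENNReal.ofReal (‖Pd 0 u y‖^2) + ENNReal.ofReal (‖Pd 1 (Pd 0 u) y‖^2)) with hF1
  set F2 : Esp → ENNReal := fun y =>
    ((ENNReal.ofReal (‖u y‖^2) + ENNReal.ofReal (‖Pd 2 u y‖^2)) +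
     (ENNReal.ofReal (‖Pd 1 u y‖^2) + ENNReal.ofReal (‖Pd 2 (Pd 1 u) y‖^2))) +
    ((ENNReal.ofReal (‖Pd 0 u y‖^2) + ENNReal.ofReal (‖Pd 2 (Pd 0 u) y‖^2)) +
     (ENNReal.ofReal (‖Pd 1 (Pd 0 u) y‖^2) + ENNReal.ofReal (‖Pd 2 (Pd 1 (Pd 0 u)) y‖^2))) with hF2
  have hmeas : ∀ (g : Esp → ℂ), Continuous g → ∀ (y : Esp) (i : Fin 3),
      Measurable (fun t : ℝ => ENNReal.ofReal (‖g (y + t • eE i)‖^2)) := by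
    intro g hg y i
    exact (ENNReal.continuous_ofReal.comp
      (((hg.comp (continuous_const.add (continuous_id.smul continuous_const))).norm).pow 2)).measurable
  have step0 : ENNReal.ofReal (‖u x‖^2) ≤ 2 * ∫⁻ t in Icc (0:ℝ) 1, F0 (x + t • eE 0) :=
    sliceE hu1' x 0
  have step1 : ∀ y : Esp, F0 y ≤ 2 * ∫⁻ t in Icc (0:ℝ) 1, F1 (y + t • eE 1) := by
    intro y
    have s1 := sliceE hu1' y 1
    have s2 := sliceE (hP1' 0) y 1
    calc F0 y ≤ (2 * ∫⁻ t in Icc (0:ℝ) 1,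
          (ENNReal.ofReal (‖u (y + t • eE 1)‖^2) + ENNReal.ofReal (‖Pd 1 u (y + t • eE 1)‖^2)))
        + (2 * ∫⁻ t in Icc (0:ℝ) 1, (ENNReal.ofReal (‖Pd 0 u (y + t • eE 1)‖^2)
            + ENNReal.ofReal (‖Pd 1 (Pd 0 u) (y + t • eE 1)‖^2))) := add_le_add s1 s2
      _ = 2 * ∫⁻ t in Icc (0:ℝ) 1, F1 (y + t • eE 1) := by
          rw [← mul_add]
          congr 1
          rw [← lintegral_add_left (show Measurable fun t : ℝ => ENNReal.ofReal (‖u (y + t • eE 1)‖^2) + ENNReal.ofReal (‖Pd 1 u (y + t • eE 1)‖^2) from (hmeas u huc y 1).add (hmeas (Pd 1 u) (hPc 1) y 1))]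
  have step2 : ∀ y : Esp, F1 y ≤ 2 * ∫⁻ t in Icc (0:ℝ) 1, F2 (y + t • eE 2) := by
    intro y
    have s1 := sliceE hu1' y 2
    have s2 := sliceE (hP1' 1) y 2
    have s3 := sliceE (hP1' 0) y 2
    have s4 := sliceE (hPP1' 0 1) y 2
    calc F1 y ≤ ((2 * ∫⁻ t in Icc (0:ℝ) 1,
          (ENNReal.ofReal (‖u (y + t • eE 2)‖^2) + ENNReal.ofReal (‖Pd 2 u (y + t • eE 2)‖^2)))
        + (2 * ∫⁻ t in Icc (0:ℝ) 1, (ENNReal.ofReal (‖Pd 1 u (y + t • eE 2)‖^2)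
            + ENNReal.ofReal (‖Pd 2 (Pd 1 u) (y + t • eE 2)‖^2))))
        + ((2 * ∫⁻ t in Icc (0:ℝ) 1, (ENNReal.ofReal (‖Pd 0 u (y + t • eE 2)‖^2)
            + ENNReal.ofReal (‖Pd 2 (Pd 0 u) (y + t • eE 2)‖^2)))
        + (2 * ∫⁻ t in Icc (0:ℝ) 1, (ENNReal.ofReal (‖Pd 1 (Pd 0 u) (y + t • eE 2)‖^2)
            + ENNReal.ofReal (‖Pd 2 (Pd 1 (Pd 0 u)) (y + t • eE 2)‖^2)))) :=
          add_le_add (add_le_add s1 s2) (add_le_add s3 s4)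
      _ = 2 * ∫⁻ t in Icc (0:ℝ) 1, F2 (y + t • eE 2) := by
          have m1 : Measurable fun t : ℝ => ENNReal.ofReal (‖u (y + t • eE 2)‖^2)
              + ENNReal.ofReal (‖Pd 2 u (y + t • eE 2)‖^2) :=
            (hmeas u huc y 2).add (hmeas (Pd 2 u) (hPc 2) y 2)
          have m2 : Measurable fun t : ℝ => ENNReal.ofReal (‖Pd 1 u (y + t • eE 2)‖^2)
              + ENNReal.ofReal (‖Pd 2 (Pd 1 u) (y + t • eE 2)‖^2) :=
            (hmeas (Pd 1 u) (hPc 1) y 2).add (hmeas (Pd 2 (Pd 1 u)) (hPPc 1 2) y 2)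
          have m3 : Measurable fun t : ℝ => ENNReal.ofReal (‖Pd 0 u (y + t • eE 2)‖^2)
              + ENNReal.ofReal (‖Pd 2 (Pd 0 u) (y + t • eE 2)‖^2) :=
            (hmeas (Pd 0 u) (hPc 0) y 2).add (hmeas (Pd 2 (Pd 0 u)) (hPPc 0 2) y 2)
          rw [← mul_add, ← mul_add, ← mul_add]
          congr 1
          rw [← lintegral_add_left m1, ← lintegral_add_left m3, ← lintegral_add_left (show Measurable fun t : ℝ => (ENNReal.ofReal (‖u (y + t • eE 2)‖^2) + ENNReal.ofReal (‖Pd 2 u (y + t • eE 2)‖^2)) + (ENNReal.ofReal (‖Pd 1 u (y + t • eE 2)‖^2) + ENNReal.ofReal (‖Pd 2 (Pd 1 u) (y + t • eE 2)‖^2)) from m1.add m2)]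
  set T : Esp → ENNReal := fun y => ∑ j ∈ Finset.range 4,
    ENNReal.ofReal (‖iteratedFDeriv ℝ j u y‖^2) with hT
  have hcj : ∀ j ∈ Finset.range 4, Continuous fun y => iteratedFDeriv ℝ j u y := by
    intro j hj
    refine ContDiff.continuous_iteratedFDeriv ?_ hu
    have hj3 : j ≤ 3 := Nat.lt_succ_iff.mp (Finset.mem_range.mp hj)
    exact_mod_cast Nat.cast_le.mpr hj3
  have hTmeas : Measurable T := by
    rw [hT]
    refine Finset.measurable_sum _ fun j hj => ?_
    exact (ENNReal.continuous_ofReal.comp (((hcj j hj).norm).pow 2)).measurable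
  have hF2T : ∀ y, F2 y ≤ 3 * T y := by
    intro y
    have hTy : T y = ((ENNReal.ofReal (‖iteratedFDeriv ℝ 0 u y‖^2)
        + ENNReal.ofReal (‖iteratedFDeriv ℝ 1 u y‖^2))
        + ENNReal.ofReal (‖iteratedFDeriv ℝ 2 u y‖^2))
        + ENNReal.ofReal (‖iteratedFDeriv ℝ 3 u y‖^2) := by
      simp only [hT, Finset.sum_range_succ, Finset.sum_range_zero, zero_add]
    have e0 : ENNReal.ofReal (‖u y‖^2) ≤ ENNReal.ofReal (‖iteratedFDeriv ℝ 0 u y‖^2) := by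
      rw [norm_iteratedFDeriv_zero]
    have e1 : ∀ i : Fin 3, ENNReal.ofReal (‖Pd i u y‖^2)
        ≤ ENNReal.ofReal (‖iteratedFDeriv ℝ 1 u y‖^2) := fun i =>
      ENNReal.ofReal_le_ofReal (pow_le_pow_left₀ (norm_nonneg _) (hb1 i y) 2)
    have e2 : ∀ i j : Fin 3, ENNReal.ofReal (‖Pd j (Pd i u) y‖^2)
        ≤ ENNReal.ofReal (‖iteratedFDeriv ℝ 2 u y‖^2) := fun i j =>
      ENNReal.ofReal_le_ofReal (pow_le_pow_left₀ (norm_nonneg _) (hb2 i j y) 2)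
    have e3 : ∀ i j l : Fin 3, ENNReal.ofReal (‖Pd l (Pd j (Pd i u)) y‖^2)
        ≤ ENNReal.ofReal (‖iteratedFDeriv ℝ 3 u y‖^2) := fun i j l =>
      ENNReal.ofReal_le_ofReal (pow_le_pow_left₀ (norm_nonneg _) (hb3 i j l y) 2)
    set A := ENNReal.ofReal (‖iteratedFDeriv ℝ 0 u y‖^2)
    set B := ENNReal.ofReal (‖iteratedFDeriv ℝ 1 u y‖^2)
    set C := ENNReal.ofReal (‖iteratedFDeriv ℝ 2 u y‖^2)
    set D := ENNReal.ofReal (‖iteratedFDeriv ℝ 3 u y‖^2)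
    calc F2 y ≤ ((A + B) + (B + C)) + ((B + C) + (C + D)) :=
          add_le_add (add_le_add (add_le_add e0 (e1 2)) (add_le_add (e1 1) (e2 1 2)))
            (add_le_add (add_le_add (e1 0) (e2 0 2)) (add_le_add (e2 0 1) (e3 0 1 2)))
      _ ≤ 3 * T y := by
          rw [hTy]
          exact le_iff_exists_add.mpr ⟨2*A + 2*D, by ring⟩
  set Ti : Esp → ENNReal := (Qx x).indicator T with hTi
  have hTim : Measurable Ti := hTmeas.indicator (measurableSet_Qx x)
  have hmem3 : ∀ t₀ ∈ Icc (0:ℝ) 1, ∀ t₁ ∈ Icc (0:ℝ) 1, ∀ t₂ ∈ Icc (0:ℝ) 1,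
      F2 (x + t₀ • eE 0 + t₁ • eE 1 + t₂ • eE 2)
        ≤ 3 * Ti (x + t₀ • eE 0 + t₁ • eE 1 + t₂ • eE 2) := by
    intro t₀ h₀ t₁ h₁ t₂ h₂
    rw [hTi, Set.indicator_of_mem (mem_Qx h₀ h₁ h₂)]
    exact hF2T _
  calc ENNReal.ofReal (‖u x‖^2)
      ≤ 2 * ∫⁻ t₀ in Icc (0:ℝ) 1, F0 (x + t₀ • eE 0) := step0
    _ ≤ 2 * ∫⁻ t₀ in Icc (0:ℝ) 1, 2 * ∫⁻ t₁ in Icc (0:ℝ) 1,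
          F1 (x + t₀ • eE 0 + t₁ • eE 1) :=
        mul_le_mul_right (lintegral_mono fun t₀ => step1 _) 2
    _ ≤ 2 * ∫⁻ t₀ in Icc (0:ℝ) 1, 2 * ∫⁻ t₁ in Icc (0:ℝ) 1, 2 * ∫⁻ t₂ in Icc (0:ℝ) 1,
          F2 (x + t₀ • eE 0 + t₁ • eE 1 + t₂ • eE 2) :=
        mul_le_mul_right (lintegral_mono fun t₀ =>
          mul_le_mul_right (lintegral_mono fun t₁ => step2 _) 2) 2
    _ ≤ 2 * ∫⁻ t₀ in Icc (0:ℝ) 1, 2 * ∫⁻ t₁ in Icc (0:ℝ) 1, 2 * ∫⁻ t₂ in Icc (0:ℝ) 1,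
          3 * Ti (x + t₀ • eE 0 + t₁ • eE 1 + t₂ • eE 2) := by
        refine mul_le_mul_right (setLIntegral_mono' measurableSet_Icc fun t₀ h₀ => ?_) 2
        refine mul_le_mul_right (setLIntegral_mono' measurableSet_Icc fun t₁ h₁ => ?_) 2
        refine mul_le_mul_right (setLIntegral_mono' measurableSet_Icc fun t₂ h₂ => ?_) 2
        exact hmem3 t₀ h₀ t₁ h₁ t₂ h₂
    _ = 24 * ∫⁻ t₀ in Icc (0:ℝ) 1, ∫⁻ t₁ in Icc (0:ℝ) 1, ∫⁻ t₂ in Icc (0:ℝ) 1,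
          Ti (x + t₀ • eE 0 + t₁ • eE 1 + t₂ • eE 2) := by
        have einner : ∀ t₀ t₁ : ℝ, (2:ENNReal) * ∫⁻ t₂ in Icc (0:ℝ) 1,
            3 * Ti (x + t₀ • eE 0 + t₁ • eE 1 + t₂ • eE 2)
            = 6 * ∫⁻ t₂ in Icc (0:ℝ) 1, Ti (x + t₀ • eE 0 + t₁ • eE 1 + t₂ • eE 2) := by
          intro t₀ t₁
          rw [lintegral_const_mul' 3 _ (by norm_num), ← mul_assoc]
          norm_num
        have emid : ∀ t₀ : ℝ, (2:ENNReal) * ∫⁻ t₁ in Icc (0:ℝ) 1,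
            (6 * ∫⁻ t₂ in Icc (0:ℝ) 1, Ti (x + t₀ • eE 0 + t₁ • eE 1 + t₂ • eE 2))
            = 12 * ∫⁻ t₁ in Icc (0:ℝ) 1, ∫⁻ t₂ in Icc (0:ℝ) 1,
                Ti (x + t₀ • eE 0 + t₁ • eE 1 + t₂ • eE 2) := by
          intro t₀
          rw [lintegral_const_mul' 6 _ (by norm_num), ← mul_assoc]
          norm_num
        calc 2 * ∫⁻ t₀ in Icc (0:ℝ) 1, 2 * ∫⁻ t₁ in Icc (0:ℝ) 1, 2 * ∫⁻ t₂ in Icc (0:ℝ) 1,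
              3 * Ti (x + t₀ • eE 0 + t₁ • eE 1 + t₂ • eE 2)
            = 2 * ∫⁻ t₀ in Icc (0:ℝ) 1, 12 * ∫⁻ t₁ in Icc (0:ℝ) 1, ∫⁻ t₂ in Icc (0:ℝ) 1,
              Ti (x + t₀ • eE 0 + t₁ • eE 1 + t₂ • eE 2) := by
              congr 1
              apply lintegral_congr
              intro t₀
              rw [← emid t₀]
              congr 1
              apply lintegral_congr
              intro t₁
              exact einner t₀ t₁
          _ = 24 * ∫⁻ t₀ in Icc (0:ℝ) 1, ∫⁻ t₁ in Icc (0:ℝ) 1, ∫⁻ t₂ in Icc (0:ℝ) 1,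
              Ti (x + t₀ • eE 0 + t₁ • eE 1 + t₂ • eE 2) := by
              rw [lintegral_const_mul' 12 _ (by norm_num), ← mul_assoc]
              norm_num
    _ ≤ 24 * ∫⁻ y, Ti y := mul_le_mul_right (iterated_le_lintegral Ti hTim x) 24
    _ = 24 * ∫⁻ y in Qx x, T y := by rw [hTi, lintegral_indicator (measurableSet_Qx x)]
    _ = 24 * ∑ j ∈ Finset.range 4, ∫⁻ y in Qx x,
          ENNReal.ofReal (‖iteratedFDeriv ℝ j u y‖^2) := by
        congr 1
        rw [hT]
        exact lintegral_finset_sum _ fun j hj =>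
          (ENNReal.continuous_ofReal.comp (((hcj j hj).norm).pow 2)).measurable

lemma rpow_subadd {a b γ : ℝ} (ha : 0 ≤ a) (hb : 0 ≤ b) (hγ0 : 0 ≤ γ) (hγ1 : γ ≤ 1) :
    (a + b) ^ γ ≤ a ^ γ + b ^ γ := by
  have h := NNReal.rpow_add_le_add_rpow a.toNNReal b.toNNReal hγ0 hγ1
  have h2 := NNReal.coe_le_coe.mpr h
  push_cast [NNReal.coe_rpow] at h2
  rwa [Real.coe_toNNReal a ha, Real.coe_toNNReal b hb] at h2

lemma one_le_jbe (k : Fin 3 → ℤ) (η : Esp) : 1 ≤ jbe k η := by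
  rw [jbe, Real.one_le_sqrt]
  have h1 : (0:ℝ) ≤ ∑ i, ((k i : ℝ))^2 := Finset.sum_nonneg fun i _ => sq_nonneg _
  nlinarith [sq_nonneg ‖η‖]

lemma jbe_le_of_mem {k : Fin 3 → ℤ} {η₀ y : Esp} (hy : y ∈ Qx η₀) :
    jbe k η₀ ≤ jbe k y + 2 := by
  have hd : ‖η₀ - y‖ ≤ 2 := by
    rw [EuclideanSpace.norm_eq]
    have hsum : ∑ i, ‖(η₀ - y) i‖^2 ≤ 4 := by
      have hone : ∀ i : Fin 3, ‖(η₀ - y) i‖^2 ≤ (4:ℝ)/3 := by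
        intro i
        have h := hy i
        have h1 := h.1; have h2 := h.2
        simp only [Real.norm_eq_abs, PiLp.sub_apply, sq_abs]
        nlinarith
      calc ∑ i, ‖(η₀ - y) i‖^2 ≤ ∑ _i : Fin 3, (4:ℝ)/3 :=
            Finset.sum_le_sum fun i _ => hone i
        _ ≤ 4 := by rw [Finset.sum_const]; norm_num
    calc Real.sqrt (∑ i, ‖(η₀ - y) i‖^2) ≤ Real.sqrt 4 := Real.sqrt_le_sqrt hsum
      _ = 2 := by rw [show (4:ℝ) = 2^2 by norm_num, Real.sqrt_sq (by norm_num)]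
  have h1 : ‖η₀‖ ≤ ‖y‖ + 2 := by
    have h2 : ‖η₀‖ ≤ ‖y‖ + ‖η₀ - y‖ := by
      have := norm_add_le y (η₀ - y)
      simpa using this
    linarith
  rw [jbe, jbe]
  set s := ∑ i, ((k i : ℝ))^2 with hs
  have hs0 : (0:ℝ) ≤ s := Finset.sum_nonneg fun i _ => sq_nonneg _
  have hys : ‖y‖ ≤ Real.sqrt (1 + s + ‖y‖^2) := by
    calc ‖y‖ = Real.sqrt (‖y‖^2) := (Real.sqrt_sq (norm_nonneg _)).symm
      _ ≤ Real.sqrt (1 + s + ‖y‖^2) := Real.sqrt_le_sqrt (by nlinarith)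
  have hq0 : (0:ℝ) ≤ 1 + s + ‖y‖^2 := by positivity
  have hkey : 1 + s + ‖η₀‖^2 ≤ (Real.sqrt (1 + s + ‖y‖^2) + 2)^2 := by
    nlinarith [Real.sq_sqrt hq0, hys, h1, norm_nonneg y, norm_nonneg η₀]
  calc Real.sqrt (1 + s + ‖η₀‖^2) ≤ Real.sqrt ((Real.sqrt (1 + s + ‖y‖^2) + 2)^2) :=
        Real.sqrt_le_sqrt hkey
    _ = Real.sqrt (1 + s + ‖y‖^2) + 2 := Real.sqrt_sq (by positivity)

lemma weight_cmp {γ σ lam₁ z : ℝ} (hγ0 : 0 < γ) (hγ1 : γ ≤ 1) (hσ : 0 < σ)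
    (hz0 : 0 ≤ z) (hz1 : z ≤ lam₁) {k : Fin 3 → ℤ} {η₀ y : Esp} (hy : y ∈ Qx η₀) :
    (Real.exp (z * jbe k η₀ ^ γ) * jbe k η₀ ^ σ)^2 ≤
      (Real.exp (4*lam₁) * (3:ℝ)^(2*σ)) *
        (Real.exp (2*z*jbe k y ^ γ) * jbe k y ^ (2*σ)) := by
  have h0 := one_le_jbe k η₀
  have h1 := one_le_jbe k y
  have hle := jbe_le_of_mem (k := k) hy
  have hrg : jbe k η₀ ^ γ ≤ jbe k y ^ γ + 2 := by
    calc jbe k η₀ ^ γ ≤ (jbe k y + 2) ^ γ :=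
          Real.rpow_le_rpow (by linarith) hle hγ0.le
      _ ≤ jbe k y ^ γ + 2 ^ γ := rpow_subadd (by linarith) (by norm_num) hγ0.le hγ1
      _ ≤ jbe k y ^ γ + 2 := by
          have h2 : (2:ℝ)^γ ≤ 2^(1:ℝ) := Real.rpow_le_rpow_of_exponent_le (by norm_num) hγ1
          rw [Real.rpow_one] at h2; linarith
  have hexp : (Real.exp (z * jbe k η₀ ^ γ))^2 ≤ Real.exp (4*lam₁ + 2*z*jbe k y ^ γ) := by
    rw [sq, ← Real.exp_add]
    apply Real.exp_le_exp.mpr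
    nlinarith [mul_le_mul_of_nonneg_left hrg hz0]
  have hpw : (jbe k η₀ ^ σ)^2 ≤ (3:ℝ)^(2*σ) * jbe k y ^ (2*σ) := by
    have h3 : jbe k η₀ ≤ 3 * jbe k y := by linarith
    calc (jbe k η₀ ^ σ)^2 = jbe k η₀ ^ (2*σ) := by
          rw [← Real.rpow_natCast (jbe k η₀ ^ σ) 2, ← Real.rpow_mul (by linarith)]
          norm_num [mul_comm]
      _ ≤ (3 * jbe k y) ^ (2*σ) := Real.rpow_le_rpow (by linarith) h3 (by positivity)
      _ = (3:ℝ)^(2*σ) * jbe k y ^ (2*σ) := Real.mul_rpow (by norm_num) (by linarith)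
  calc (Real.exp (z * jbe k η₀ ^ γ) * jbe k η₀ ^ σ)^2
      = (Real.exp (z * jbe k η₀ ^ γ))^2 * (jbe k η₀ ^ σ)^2 := by ring
    _ ≤ Real.exp (4*lam₁ + 2*z*jbe k y ^ γ) * ((3:ℝ)^(2*σ) * jbe k y ^ (2*σ)) := by
        apply mul_le_mul hexp hpw (by positivity) (by positivity)
    _ = (Real.exp (4*lam₁) * (3:ℝ)^(2*σ)) *
        (Real.exp (2*z*jbe k y ^ γ) * jbe k y ^ (2*σ)) := by
        rw [Real.exp_add]; ring

/-- The comparison `F[ρ](t,z) ≤ C·G[g(t)]^{1/2}(z)` between the generator functions,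
at the level of the Fourier coefficients `w_k(η) = ĝ_{k,η}(t)`. -/
theorem F_le_sqrt_G {γ σ α lam₁ : ℝ} (hγ0 : 0 < γ) (hγ1 : γ ≤ 1) (hσ : 0 < σ)
    (hα0 : 0 ≤ α) (hα : α < 1 / 2) (hlam : 0 < lam₁) :
    ∃ C : ℝ, 0 < C ∧ ∀ z : ℝ, 0 ≤ z → z ≤ lam₁ →
      ∀ w : (Fin 3 → ℤ) → EuclideanSpace ℝ (Fin 3) → ℂ,
        (∀ k : Fin 3 → ℤ, ContDiff ℝ 3 (w k)) →
        ∀ G : ENNReal,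
          (∑' k : Fin 3 → ℤ, ∑ j ∈ Finset.range 4,
              ∫⁻ η : EuclideanSpace ℝ (Fin 3),
                ENNReal.ofReal (Real.exp (2 * z * jbe k η ^ γ) *
                  ‖iteratedFDeriv ℝ j (w k) η‖ ^ 2 * jbe k η ^ (2 * σ))) = G →
          G ≠ ⊤ →
          (∀ (k : Fin 3 → ℤ) (η : EuclideanSpace ℝ (Fin 3)),
              Real.exp (z * jbe k η ^ γ) * jbe k η ^ σ * ‖w k η‖ ≤
                C * Real.sqrt G.toReal) ∧
          (∀ t : ℝ, 0 ≤ t → ∀ k : Fin 3 → ℤ, k ≠ 0 →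
              Real.exp (z * jbe k (ktv k t) ^ γ) * jbe k (ktv k t) ^ σ *
                  knorm k ^ (-α) * ‖w k (ktv k t)‖ ≤
                C * Real.sqrt G.toReal) := by
  set c₁ : ℝ := Real.exp (4*lam₁) * (3:ℝ)^(2*σ) with hc₁
  have hc₁pos : 0 < c₁ := by positivity
  refine ⟨Real.sqrt (24 * c₁), Real.sqrt_pos.mpr (by positivity), ?_⟩
  intro z hz0 hz1 w hw G hG hGtop
  have main : ∀ (k : Fin 3 → ℤ) (η₀ : EuclideanSpace ℝ (Fin 3)),
      Real.exp (z * jbe k η₀ ^ γ) * jbe k η₀ ^ σ * ‖w k η₀‖ ≤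
        Real.sqrt (24 * c₁) * Real.sqrt G.toReal := by
    intro k η₀
    set W : ℝ := Real.exp (z * jbe k η₀ ^ γ) * jbe k η₀ ^ σ with hWdef
    have hj0 := one_le_jbe k η₀
    have hWpos : 0 < W := by
      rw [hWdef]
      have : (0:ℝ) < jbe k η₀ ^ σ := Real.rpow_pos_of_pos (by linarith) σ
      positivity
    -- the G-term for this k
    set Sk : ENNReal := ∑ j ∈ Finset.range 4, ∫⁻ η : EuclideanSpace ℝ (Fin 3),
      ENNReal.ofReal (Real.exp (2 * z * jbe k η ^ γ) *
        ‖iteratedFDeriv ℝ j (w k) η‖ ^ 2 * jbe k η ^ (2 * σ)) with hSk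
    have hSkG : Sk ≤ G := by
      rw [← hG]
      exact ENNReal.le_tsum k
    -- pointwise comparison on the cube
    have hptwise : ∀ j ∈ Finset.range 4, ∀ y ∈ Qx η₀,
        ENNReal.ofReal (‖iteratedFDeriv ℝ j (w k) y‖^2) ≤
          ENNReal.ofReal (c₁ / W^2) * ENNReal.ofReal (Real.exp (2 * z * jbe k y ^ γ) *
            ‖iteratedFDeriv ℝ j (w k) y‖ ^ 2 * jbe k y ^ (2 * σ)) := by
      intro j _ y hy
      rw [← ENNReal.ofReal_mul (by positivity)]
      apply ENNReal.ofReal_le_ofReal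
      have hcmp : W^2 ≤ c₁ * (Real.exp (2*z*jbe k y ^ γ) * jbe k y ^ (2*σ)) :=
        weight_cmp hγ0 hγ1 hσ hz0 hz1 hy
      rw [div_mul_eq_mul_div, le_div_iff₀ (by positivity)]
      nlinarith [mul_le_mul_of_nonneg_left hcmp (sq_nonneg ‖iteratedFDeriv ℝ j (w k) y‖)]
    -- assemble in ℝ≥0∞
    have hcube := cube_sobolev (hw k) η₀
    have hkey : ENNReal.ofReal (‖w k η₀‖^2) ≤ 24 * ENNReal.ofReal (c₁ / W^2) * G := by
      calc ENNReal.ofReal (‖w k η₀‖^2)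
          ≤ 24 * ∑ j ∈ Finset.range 4, ∫⁻ y in Qx η₀,
              ENNReal.ofReal (‖iteratedFDeriv ℝ j (w k) y‖^2) := hcube
        _ ≤ 24 * ∑ j ∈ Finset.range 4, ∫⁻ y in Qx η₀,
              ENNReal.ofReal (c₁ / W^2) * ENNReal.ofReal (Real.exp (2 * z * jbe k y ^ γ) *
                ‖iteratedFDeriv ℝ j (w k) y‖ ^ 2 * jbe k y ^ (2 * σ)) := by
            refine mul_le_mul_right (Finset.sum_le_sum fun j hj => ?_) 24
            exact setLIntegral_mono' (measurableSet_Qx η₀) (hptwise j hj)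
        _ ≤ 24 * ∑ j ∈ Finset.range 4, ENNReal.ofReal (c₁ / W^2) *
              ∫⁻ y : EuclideanSpace ℝ (Fin 3),
              ENNReal.ofReal (Real.exp (2 * z * jbe k y ^ γ) *
                ‖iteratedFDeriv ℝ j (w k) y‖ ^ 2 * jbe k y ^ (2 * σ)) := by
            refine mul_le_mul_right (Finset.sum_le_sum fun j hj => ?_) 24
            rw [lintegral_const_mul' _ _ ENNReal.ofReal_ne_top]
            exact mul_le_mul_right (setLIntegral_le_lintegral _ _) _
        _ = 24 * (ENNReal.ofReal (c₁ / W^2) * Sk) := by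
            rw [hSk]
            congr 1
            exact (Finset.mul_sum _ _ _).symm
        _ ≤ 24 * (ENNReal.ofReal (c₁ / W^2) * G) :=
            mul_le_mul_right (mul_le_mul_right hSkG _) 24
        _ = 24 * ENNReal.ofReal (c₁ / W^2) * G := by rw [mul_assoc]
    -- multiply by ofReal (W^2) and take toReal
    have hsq : W^2 * ‖w k η₀‖^2 ≤ 24 * c₁ * G.toReal := by
      have hmul : ENNReal.ofReal (W^2 * ‖w k η₀‖^2) ≤ 24 * ENNReal.ofReal c₁ * G := by
        rw [ENNReal.ofReal_mul (by positivity)]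
        calc ENNReal.ofReal (W^2) * ENNReal.ofReal (‖w k η₀‖^2)
            ≤ ENNReal.ofReal (W^2) * (24 * ENNReal.ofReal (c₁ / W^2) * G) :=
              mul_le_mul_right hkey _
          _ = 24 * (ENNReal.ofReal (W^2) * ENNReal.ofReal (c₁ / W^2)) * G := by ring
          _ = 24 * ENNReal.ofReal c₁ * G := by
              rw [← ENNReal.ofReal_mul (by positivity)]
              congr 2
              field_simp
      have hfin : (24 : ENNReal) * ENNReal.ofReal c₁ * G ≠ ⊤ :=
        ENNReal.mul_ne_top (ENNReal.mul_ne_top (by norm_num) ENNReal.ofReal_ne_top) hGtop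
      have := ENNReal.toReal_mono hfin hmul
      rw [ENNReal.toReal_ofReal (by positivity)] at this
      calc W^2 * ‖w k η₀‖^2 ≤ ((24 : ENNReal) * ENNReal.ofReal c₁ * G).toReal := this
        _ = 24 * c₁ * G.toReal := by
            rw [ENNReal.toReal_mul, ENNReal.toReal_mul, ENNReal.toReal_ofReal hc₁pos.le]
            norm_num
    have habs : ‖w k η₀‖ = ‖w k η₀‖ := rfl
    rw [habs]
    calc W * ‖w k η₀‖ = Real.sqrt ((W * ‖w k η₀‖)^2) :=
          (Real.sqrt_sq (by positivity)).symm
      _ ≤ Real.sqrt (24 * c₁ * G.toReal) := by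
          apply Real.sqrt_le_sqrt
          calc (W * ‖w k η₀‖)^2 = W^2 * ‖w k η₀‖^2 := by ring
            _ ≤ 24 * c₁ * G.toReal := hsq
      _ = Real.sqrt (24 * c₁) * Real.sqrt G.toReal := Real.sqrt_mul (by positivity) _
  refine ⟨main, ?_⟩
  intro t ht k hk
  have hknorm : 1 ≤ knorm k := by
    rw [knorm, Real.one_le_sqrt]
    obtain ⟨i, hi⟩ := Function.ne_iff.mp hk
    have h1 : (1:ℝ) ≤ ((k i : ℝ))^2 := by
      have := Int.one_le_abs (by simpa using hi)
      have h2 : (1:ℝ) ≤ |(k i : ℝ)| := by exact_mod_cast this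
      nlinarith [sq_abs ((k i : ℝ)), mul_self_nonneg (|(k i : ℝ)| - 1), abs_nonneg ((k i : ℝ))]
    calc (1:ℝ) ≤ ((k i : ℝ))^2 := h1
      _ ≤ ∑ i, ((k i : ℝ))^2 :=
          Finset.single_le_sum (fun i _ => sq_nonneg ((k i : ℝ))) (Finset.mem_univ i)
  have hK1 : knorm k ^ (-α) ≤ 1 :=
    Real.rpow_le_one_of_one_le_of_nonpos hknorm (by linarith)
  have hj := one_le_jbe k (ktv k t)
  have hE : (0:ℝ) < Real.exp (z * jbe k (ktv k t) ^ γ) := Real.exp_pos _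
  have hJ : (0:ℝ) < jbe k (ktv k t) ^ σ := Real.rpow_pos_of_pos (by linarith) σ
  have hA : (0:ℝ) ≤ ‖w k (ktv k t)‖ := norm_nonneg _
  have hEJA : (0:ℝ) ≤ Real.exp (z * jbe k (ktv k t) ^ γ) * jbe k (ktv k t) ^ σ *
      ‖w k (ktv k t)‖ := by positivity
  calc Real.exp (z * jbe k (ktv k t) ^ γ) * jbe k (ktv k t) ^ σ * knorm k ^ (-α) *
        ‖w k (ktv k t)‖
      = (Real.exp (z * jbe k (ktv k t) ^ γ) * jbe k (ktv k t) ^ σ *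
          ‖w k (ktv k t)‖) * (knorm k ^ (-α)) := by ring
    _ ≤ (Real.exp (z * jbe k (ktv k t) ^ γ) * jbe k (ktv k t) ^ σ *
          ‖w k (ktv k t)‖) * 1 := mul_le_mul_of_nonneg_left hK1 hEJA
    _ = Real.exp (z * jbe k (ktv k t) ^ γ) * jbe k (ktv k t) ^ σ *
          ‖w k (ktv k t)‖ := mul_one _
    _ ≤ Real.sqrt (24 * c₁) * Real.sqrt G.toReal := main k (ktv k t)
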